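/- Let ρ_W = (1/3)|00⟩⟨00| + (2/3)|ψ⁺⟩⟨ψ⁺| with |ψ⁺⟩ = (|01⟩ + |10⟩)/√2, the two-qubit reduced state of the W state |W⟩ = (|100⟩ + |010⟩ + |001⟩)/√3. Then max over pure product states |a⟩⊗|b⟩ of ⟨a|⟨b| ρ_W |a⟩|b⟩ equals 4/9. -/

import Mathlib

open Real

noncomputable def ket00 : EuclideanSpace ℂ (Fin 2 × Fin 2) :=
  WithLp.toLp 2 (fun p : Fin 2 × Fin 2 => if p = (0, 0) then 1 else 0)

noncomputable def psiPlus : EuclideanSpace ℂ (Fin 2 × Fin 2) :=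
  WithLp.toLp 2 (fun p : Fin 2 × Fin 2 => if p = (0, 1) ∨ p = (1, 0) then ((Real.sqrt 2)⁻¹ : ℂ) else 0)

noncomputable def prodVec2 (a b : EuclideanSpace ℂ (Fin 2)) :
    EuclideanSpace ℂ (Fin 2 × Fin 2) :=
  WithLp.toLp 2 (fun p : Fin 2 × Fin 2 => a p.1 * b p.2)

/-- ⟨a⊗b| ρ_W |a⊗b⟩ where ρ_W = (1/3)|00⟩⟨00| + (2/3)|ψ⁺⟩⟨ψ⁺| is the
two-qubit reduced state of the W state. -/
noncomputable def rhoWExp (a b : EuclideanSpace ℂ (Fin 2)) : ℝ :=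
  (1/3) * ‖(inner ℂ (prodVec2 a b) ket00 : ℂ)‖^2
    + (2/3) * ‖(inner ℂ (prodVec2 a b) psiPlus : ℂ)‖^2

/-! ### Auxiliary lemmas -/

lemma keyPoly (x y : ℝ) (hx0 : 0 ≤ x) (hx1 : x ≤ 1) (hy0 : 0 ≤ y) (hy1 : y ≤ 1) :
    4*(x*y*(1-x)*(1-y)) ≤ (1/3 + (1-x)*(1-y))^2 := by
  nlinarith [sq_nonneg (x-y), sq_nonneg (x+y-4/3), mul_nonneg hx0 hy0,
    mul_nonneg (sub_nonneg.2 hx1) (sub_nonneg.2 hy1),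
    mul_nonneg hx0 (sub_nonneg.2 hy1), mul_nonneg hy0 (sub_nonneg.2 hx1),
    sq_nonneg ((x-2/3)*(y-2/3)), sq_nonneg (x+y-x*y-8/9),
    mul_nonneg (mul_nonneg hx0 hy0) (sq_nonneg (x-y)),
    mul_nonneg (mul_nonneg (sub_nonneg.2 hx1) (sub_nonneg.2 hy1)) (sq_nonneg (x-y)),
    sq_nonneg (5*(x+y)/3 - x*y - 16/9)]

lemma prodBound (A A' B B' : ℝ) (hA : 0 ≤ A) (hA' : 0 ≤ A') (hB : 0 ≤ B) (hB' : 0 ≤ B')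
    (ha : A^2 + A'^2 = 1) (hb : B^2 + B'^2 = 1) :
    A^2*B^2 + (A*B' + A'*B)^2 ≤ 4/3 := by
  have hx1 : A^2 ≤ 1 := by nlinarith [sq_nonneg A']
  have hy1 : B^2 ≤ 1 := by nlinarith [sq_nonneg B']
  have key := keyPoly (A^2) (B^2) (sq_nonneg A) hx1 (sq_nonneg B) hy1
  have h1 : (1:ℝ) - A^2 = A'^2 := by linarith
  have h2 : (1:ℝ) - B^2 = B'^2 := by linarith
  rw [h1, h2] at key
  have hs : (2*(A*A'*B*B'))^2 ≤ (1/3 + A'^2*B'^2)^2 := by nlinarith [key]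
  have hpos : (0:ℝ) ≤ 1/3 + A'^2*B'^2 := by positivity
  have h3 : 2*(A*A'*B*B') ≤ 1/3 + A'^2*B'^2 := by
    nlinarith [hs, hpos, mul_nonneg (mul_nonneg (mul_nonneg hA hA') hB) hB']
  nlinarith [h3]

lemma norm_sq_sum (a : EuclideanSpace ℂ (Fin 2)) (h : ‖a‖ = 1) :
    ‖a 0‖^2 + ‖a 1‖^2 = 1 := by
  have := EuclideanSpace.norm_eq a
  rw [h, Fin.sum_univ_two] at this
  have h2 : Real.sqrt (‖a 0‖^2 + ‖a 1‖^2) = 1 := this.symm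
  have := Real.sqrt_eq_one.mp h2
  linarith

lemma rhoW_le (a b : EuclideanSpace ℂ (Fin 2)) (ha : ‖a‖ = 1) (hb : ‖b‖ = 1) :
    rhoWExp a b ≤ 4/9 := by
  have e1 : (inner ℂ (prodVec2 a b) ket00 : ℂ) = starRingEnd ℂ (a 0 * b 0) := by
    simp [PiLp.inner_apply, Fintype.sum_prod_type, Fin.sum_univ_two, ket00, prodVec2,
      Prod.ext_iff]
  have e2 : (inner ℂ (prodVec2 a b) psiPlus : ℂ)
      = starRingEnd ℂ (a 0 * b 1 + a 1 * b 0) * ((Real.sqrt 2)⁻¹ : ℂ) := by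
    simp [PiLp.inner_apply, Fintype.sum_prod_type, Fin.sum_univ_two, psiPlus, prodVec2,
      Prod.ext_iff]
    ring
  have hna := norm_sq_sum a ha
  have hnb := norm_sq_sum b hb
  set A := ‖a 0‖; set A' := ‖a 1‖; set B := ‖b 0‖; set B' := ‖b 1‖
  have hI1 : ‖(inner ℂ (prodVec2 a b) ket00 : ℂ)‖^2 = A^2 * B^2 := by
    rw [e1, RCLike.norm_conj, norm_mul, mul_pow]
  have hI2le : ‖(inner ℂ (prodVec2 a b) psiPlus : ℂ)‖ ≤ (A*B' + A'*B) * (Real.sqrt 2)⁻¹ := by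
    rw [e2, norm_mul, RCLike.norm_conj]
    have hc : ‖((Real.sqrt 2)⁻¹ : ℂ)‖ = (Real.sqrt 2)⁻¹ := by
      simp [Complex.norm_real, abs_of_nonneg (Real.sqrt_nonneg 2)]
    rw [hc]
    apply mul_le_mul_of_nonneg_right _ (by positivity)
    calc ‖a 0 * b 1 + a 1 * b 0‖ ≤ ‖a 0 * b 1‖ + ‖a 1 * b 0‖ := norm_add_le _ _
      _ = A*B' + A'*B := by rw [norm_mul, norm_mul]
  have hI2 : ‖(inner ℂ (prodVec2 a b) psiPlus : ℂ)‖^2 ≤ (A*B' + A'*B)^2 * (1/2) := by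
    have h := pow_le_pow_left₀ (norm_nonneg _) hI2le 2
    rw [mul_pow, inv_pow, Real.sq_sqrt (by norm_num : (0:ℝ) ≤ 2)] at h
    linarith
  have key := prodBound A A' B B' (norm_nonneg _) (norm_nonneg _) (norm_nonneg _)
    (norm_nonneg _) hna hnb
  rw [rhoWExp, hI1]
  nlinarith [hI2, key]

noncomputable def wvec : EuclideanSpace ℂ (Fin 2) :=
  WithLp.toLp 2 (fun i : Fin 2 => if i = 0 then (Real.sqrt (2/3) : ℂ) else (Real.sqrt (1/3) : ℂ))

lemma wvec_norm : ‖wvec‖ = 1 := by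
  rw [EuclideanSpace.norm_eq]
  have h2 : Real.sqrt (2/3) ^ 2 = 2/3 := Real.sq_sqrt (by norm_num)
  have h1 : Real.sqrt (1/3) ^ 2 = 1/3 := Real.sq_sqrt (by norm_num)
  simp [wvec, Fin.sum_univ_two, Complex.norm_real, abs_of_nonneg (Real.sqrt_nonneg _),
    h1, h2]
  rw [div_pow, Real.sq_sqrt (by norm_num : (0:ℝ) ≤ 2), Real.sq_sqrt (by norm_num : (0:ℝ) ≤ 3)]
  norm_num

lemma wvec_exp : rhoWExp wvec wvec = 4/9 := by
  have e1 : (inner ℂ (prodVec2 wvec wvec) ket00 : ℂ) = starRingEnd ℂ (wvec 0 * wvec 0) := by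
    simp [PiLp.inner_apply, Fintype.sum_prod_type, Fin.sum_univ_two, ket00, prodVec2,
      Prod.ext_iff]
  have e2 : (inner ℂ (prodVec2 wvec wvec) psiPlus : ℂ)
      = starRingEnd ℂ (wvec 0 * wvec 1 + wvec 1 * wvec 0) * ((Real.sqrt 2)⁻¹ : ℂ) := by
    simp [PiLp.inner_apply, Fintype.sum_prod_type, Fin.sum_univ_two, psiPlus, prodVec2,
      Prod.ext_iff]
    ring
  have h2 : Real.sqrt (2/3) ^ 2 = 2/3 := Real.sq_sqrt (by norm_num)
  have h1 : Real.sqrt (1/3) ^ 2 = 1/3 := Real.sq_sqrt (by norm_num)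
  have hs2 : ((Real.sqrt 2)⁻¹)^2 = 1/2 := by
    rw [inv_pow, Real.sq_sqrt (by norm_num)]; norm_num
  have w0 : wvec 0 = (Real.sqrt (2/3) : ℂ) := by simp [wvec]
  have w1 : wvec 1 = (Real.sqrt (1/3) : ℂ) := by simp [wvec]
  rw [rhoWExp, e1, e2, w0, w1]
  rw [norm_mul, RCLike.norm_conj, RCLike.norm_conj]
  simp only [← Complex.ofReal_mul, ← Complex.ofReal_add, norm_inv,
    Complex.norm_real, Real.norm_eq_abs]
  rw [abs_of_nonneg (by positivity : (0:ℝ) ≤ Real.sqrt (2/3) * Real.sqrt (2/3)),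
    abs_of_nonneg (by positivity :
      (0:ℝ) ≤ Real.sqrt (2/3) * Real.sqrt (1/3) + Real.sqrt (1/3) * Real.sqrt (2/3)),
    abs_of_nonneg (Real.sqrt_nonneg 2)]
  linear_combination ((1/3)*(Real.sqrt (2/3)^2+2/3) + (4/3)*Real.sqrt (1/3)^2) * h2
    + (8/9) * h1 + (8/3)*Real.sqrt (2/3)^2*Real.sqrt (1/3)^2 * hs2

theorem stmt13 :
    IsGreatest {x : ℝ | ∃ a b : EuclideanSpace ℂ (Fin 2),
      ‖a‖ = 1 ∧ ‖b‖ = 1 ∧ x = rhoWExp a b} (4/9) := by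
  constructor
  · exact ⟨wvec, wvec, wvec_norm, wvec_norm, wvec_exp.symm⟩
  · rintro x ⟨a, b, ha, hb, rfl⟩
    exact rhoW_le a b ha hb
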